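/- For every N ≥ 2, the set of extreme points of the convex hull of V̄ (equivalently, of P̄ ∩ H̄) equals V̄ itself. -/
import Mathlib


open Finset

lemma exposed_extreme_aux {E : Type*} [AddCommGroup E] [Module ℝ E] (s : Set E)
    (f : E →ₗ[ℝ] ℝ) (v : E) (hv : v ∈ s) (hfv : f v = 1)
    (hle : ∀ w ∈ s, f w ≤ 1) (heq : ∀ w ∈ s, f w = 1 → w = v) :
    v ∈ Set.extremePoints ℝ (convexHull ℝ s) := by
  -- hull is contained in {x | f x < 1} ∪ {v}
  have hconv : Convex ℝ ({x | f x < 1} ∪ {v}) := by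
    intro x hx y hy a b ha hb hab
    rcases hx with hx | hx <;> rcases hy with hy | hy
    · rcases eq_or_lt_of_le ha with ha0 | ha0
      · left; simpa [← ha0, show b = 1 by linarith] using hy
      rcases eq_or_lt_of_le hb with hb0 | hb0
      · left; simpa [← hb0, show a = 1 by linarith] using hx
      left
      have : f (a • x + b • y) = a * f x + b * f y := by simp
      have : a * f x + b * f y < a * 1 + b * 1 := by
        apply add_lt_add <;> [exact (mul_lt_mul_iff_right₀ ha0).2 hx; exact (mul_lt_mul_iff_right₀ hb0).2 hy]
      simp only [Set.mem_setOf_eq, map_add, map_smul, smul_eq_mul]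
      linarith
    · rcases eq_or_lt_of_le ha with ha0 | ha0
      · right; simpa [← ha0, show b = 1 by linarith] using hy
      left
      simp only [Set.mem_singleton_iff] at hy; subst hy
      simp only [Set.mem_setOf_eq, map_add, map_smul, smul_eq_mul, hfv]
      nlinarith [mul_lt_mul_of_pos_left hx ha0]
    · rcases eq_or_lt_of_le hb with hb0 | hb0
      · right; simpa [← hb0, show a = 1 by linarith] using hx
      left
      simp only [Set.mem_singleton_iff] at hx; subst hx
      simp only [Set.mem_setOf_eq, map_add, map_smul, smul_eq_mul, hfv]
      nlinarith [mul_lt_mul_of_pos_left hy hb0]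
    · right
      simp only [Set.mem_singleton_iff] at hx hy; subst hx; subst hy
      simp [← add_smul, hab]
  have hsub : convexHull ℝ s ⊆ {x | f x < 1} ∪ {v} := by
    apply convexHull_min _ hconv
    intro w hw
    rcases lt_or_eq_of_le (hle w hw) with h | h
    · exact Or.inl h
    · exact Or.inr (heq w hw h)
  have hhalf : convexHull ℝ s ⊆ {x | f x ≤ 1} :=
    convexHull_min (fun w hw => hle w hw) (convex_halfSpace_le f.isLinear 1)
  refine mem_extremePoints.2 ⟨subset_convexHull ℝ s hv, ?_⟩
  intro x hx y hy hseg
  obtain ⟨a, b, ha, hb, hab, habv⟩ := hseg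
  have hfx : f x ≤ 1 := hhalf hx
  have hfy : f y ≤ 1 := hhalf hy
  have hsum : a * f x + b * f y = 1 := by
    have := congrArg f habv
    simpa [hfv] using this
  have hfx1 : f x = 1 := by nlinarith
  have hfy1 : f y = 1 := by nlinarith
  constructor
  · rcases hsub hx with h | h
    · exact absurd hfx1 (ne_of_lt h)
    · exact h
  · rcases hsub hy with h | h
    · exact absurd hfy1 (ne_of_lt h)
    · exact h

/-- The vertex set `V̄` of vectors `v_{p,q,j}` with `p ≠ q`, `j ∈ {1,2}`. -/
def vertexSetVbar (N : ℕ) : Set (Fin N × Fin 2 → ℝ) :=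
  {v | ∃ p q : Fin N, ∃ j : Fin 2, p ≠ q ∧
    v = fun il => if il = (p, j) then (1 / 2 : ℝ) else if il = (q, j) then -(1 / 2 : ℝ) else 0}

theorem extremePoints_convexHull_Vbar (N : ℕ) (hN : 2 ≤ N) :
    Set.extremePoints ℝ (convexHull ℝ (vertexSetVbar N)) = vertexSetVbar N := by
  apply Set.Subset.antisymm (extremePoints_convexHull_subset)
  rintro v ⟨p, q, j, hpq, rfl⟩
  set v : Fin N × Fin 2 → ℝ :=
    fun il => if il = (p, j) then (1 / 2 : ℝ) else if il = (q, j) then -(1 / 2 : ℝ) else 0 with hv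
  have hne : (q, j) ≠ (p, j) := by simp [Ne.symm hpq]
  let f : (Fin N × Fin 2 → ℝ) →ₗ[ℝ] ℝ :=
    (LinearMap.proj (p, j) : (Fin N × Fin 2 → ℝ) →ₗ[ℝ] ℝ) - LinearMap.proj (q, j)
  have hfw : ∀ x : Fin N × Fin 2 → ℝ, f x = x (p, j) - x (q, j) := fun x => rfl
  have hfv : f v = 1 := by
    rw [hfw]; simp [hv, hne]
    norm_num
  apply exposed_extreme_aux (vertexSetVbar N) f v ⟨p, q, j, hpq, rfl⟩ hfv
  · rintro w ⟨p', q', j', hpq', rfl⟩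
    rw [hfw]
    split_ifs <;> norm_num
  · rintro w ⟨p', q', j', hpq', rfl⟩ h1
    rw [hfw] at h1
    have hne' : (p', j') ≠ (q', j') := by simp [hpq']
    split_ifs at h1 with h₁ h₂ h₃ h₄ h₅ h₆ h₇ <;> try norm_num at h1
    -- remaining case: (p,j) = (p',j') and (q,j) = (q',j')
    funext il
    simp only [hv]
    rw [← h₃, ← h₁]
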